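/- arXiv:2209.14019 — 6 statements merged into one kernel-verified Lean document; each statement's English description precedes it below -/
import Mathlib

section
/- Let H be a real Hilbert space, M a self-adjoint positive definite bounded operator with ‖M‖ ≤ C < ∞, and A : H ⇉ H a monotone operator that is γ_A-strongly monotone (γ_A ≥ 0) with respect to the standard norm. Then the resolvent J^M_A is Lipschitz continuous with constant 1/(1 + γ_A/C) with respect to the norm ‖x‖_M = √⟨Mx, x⟩; more precisely, for u = J^M_A(x), v = J^M_A(y) one has ⟨M(x−y), u−v⟩ ≥ (1 + γ_A/C)‖u−v‖²_M, and hence ‖u−v‖_M ≤ (1 + γ_A/C)⁻¹ ‖x−y‖_M. -/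
local notation "⟪" x ", " y "⟫" => @inner ℝ _ _ x y

variable {H : Type*} [NormedAddCommGroup H] [InnerProductSpace ℝ H] [CompleteSpace H]

/-- Lipschitz continuity of the resolvent `J^M_A` in the `M`-norm for a
`γ_A`-strongly monotone operator `A` and self-adjoint positive definite `M` with `‖M‖ ≤ C`.
Here `u = J^M_A x` is encoded by `M (x - u) ∈ A u` and `‖w‖_M = √⟪M w, w⟫`. -/
theorem stmt1 (M : H →L[ℝ] H)
    (hsym : ∀ x y : H, ⟪M x, y⟫ = ⟪x, M y⟫)
    (hpd : ∀ x : H, x ≠ 0 → (0:ℝ) < ⟪M x, x⟫)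
    (C : ℝ) (hMC : ‖M‖ ≤ C)
    (A : H → Set H) (γA : ℝ) (hγA : 0 ≤ γA)
    (hsm : ∀ x y u v : H, u ∈ A x → v ∈ A y → γA * ‖x - y‖ ^ 2 ≤ ⟪x - y, u - v⟫)
    (x y u v : H) (hu : M (x - u) ∈ A u) (hv : M (y - v) ∈ A v) :
    (1 + γA / C) * ⟪M (u - v), u - v⟫ ≤ ⟪M (x - y), u - v⟫ ∧
    Real.sqrt ⟪M (u - v), u - v⟫ ≤ (1 + γA / C)⁻¹ * Real.sqrt ⟪M (x - y), x - y⟫ := by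
  have hpsd : ∀ p : H, 0 ≤ ⟪M p, p⟫ := by
    intro p
    rcases eq_or_ne p 0 with h | h
    · simp [h]
    · exact (hpd p h).le
  have hC0 : (0:ℝ) ≤ C := (norm_nonneg M).trans hMC
  have hk0 : (0:ℝ) < 1 + γA / C := by positivity
  have hsymm : ∀ p q : H, ⟪M p, q⟫ = ⟪M q, p⟫ := by
    intro p q; rw [hsym, real_inner_comm]
  -- generic Cauchy–Schwarz for the M-form
  have hCSsq : ∀ p q : H, ⟪M p, q⟫ ^ 2 ≤ ⟪M p, p⟫ * ⟪M q, q⟫ := by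
    intro p q
    rcases eq_or_lt_of_le (hpsd p) with hp0 | hp0
    · rcases eq_or_ne p 0 with hp | hp
      · simp [hp]
      · exact absurd (hpd p hp) (by rw [← hp0]; exact lt_irrefl 0)
    · set t : ℝ := ⟪M p, q⟫ / ⟪M p, p⟫ with ht
      have hge := hpsd (q - t • p)
      have hexp : ⟪M (q - t • p), q - t • p⟫
          = ⟪M q, q⟫ - 2 * t * ⟪M p, q⟫ + t ^ 2 * ⟪M p, p⟫ := by
        simp only [map_sub, map_smul, inner_sub_left, inner_sub_right,
          real_inner_smul_left, real_inner_smul_right]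
        rw [hsymm q p]
        ring
      rw [hexp] at hge
      have htα : t * ⟪M p, p⟫ = ⟪M p, q⟫ := by
        rw [ht]; field_simp
      nlinarith [hge, htα, hp0]
  have hCS : ∀ p q : H, ⟪M p, q⟫ ≤ Real.sqrt ⟪M p, p⟫ * Real.sqrt ⟪M q, q⟫ := by
    intro p q
    have h := hCSsq p q
    calc ⟪M p, q⟫ ≤ |⟪M p, q⟫| := le_abs_self _
      _ = Real.sqrt (⟪M p, q⟫ ^ 2) := by rw [Real.sqrt_sq_eq_abs]
      _ ≤ Real.sqrt (⟪M p, p⟫ * ⟪M q, q⟫) := Real.sqrt_le_sqrt h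
      _ = Real.sqrt ⟪M p, p⟫ * Real.sqrt ⟪M q, q⟫ := Real.sqrt_mul (hpsd p) _
  -- key inequality from strong monotonicity
  have hmono := hsm u v (M (x - u)) (M (y - v)) hu hv
  have h1 : ⟪u - v, M (x - u) - M (y - v)⟫ = ⟪M (x - y), u - v⟫ - ⟪M (u - v), u - v⟫ := by
    rw [← map_sub]
    have hxy : x - u - (y - v) = (x - y) - (u - v) := by abel
    rw [hxy, map_sub, inner_sub_right, real_inner_comm (u - v) (M (x - y)),
      real_inner_comm (u - v) (M (u - v))]
  rw [h1] at hmono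
  have hMb : ⟪M (u - v), u - v⟫ ≤ C * ‖u - v‖ ^ 2 := by
    calc ⟪M (u - v), u - v⟫ ≤ ‖M (u - v)‖ * ‖u - v‖ := real_inner_le_norm _ _
      _ ≤ (C * ‖u - v‖) * ‖u - v‖ := by
          gcongr
          exact (M.le_opNorm _).trans (by gcongr)
      _ = C * ‖u - v‖ ^ 2 := by ring
  have part1 : (1 + γA / C) * ⟪M (u - v), u - v⟫ ≤ ⟪M (x - y), u - v⟫ := by
    rcases eq_or_lt_of_le hC0 with h | h
    · rw [← h, div_zero]
      have hnn : 0 ≤ γA * ‖u - v‖ ^ 2 := by positivity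
      linarith
    · have h2 : γA / C * ⟪M (u - v), u - v⟫ ≤ γA * ‖u - v‖ ^ 2 := by
        rw [div_mul_eq_mul_div, div_le_iff₀ h]
        nlinarith [hpsd (u - v), hMb]
      linarith
  refine ⟨part1, ?_⟩
  have hα0 : 0 ≤ ⟪M (u - v), u - v⟫ := hpsd (u - v)
  rcases eq_or_lt_of_le hα0 with hA | hA
  · rw [← hA, Real.sqrt_zero]
    positivity
  have hcs := hCS (x - y) (u - v)
  have hsa : 0 < Real.sqrt ⟪M (u - v), u - v⟫ := Real.sqrt_pos.mpr hA
  have hsa2 : Real.sqrt ⟪M (u - v), u - v⟫ * Real.sqrt ⟪M (u - v), u - v⟫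
      = ⟪M (u - v), u - v⟫ := Real.mul_self_sqrt hα0
  rw [inv_mul_eq_div, le_div_iff₀ hk0]
  nlinarith [part1, hcs, hsa, hsa2, Real.sqrt_nonneg ⟪M (x - y), x - y⟫]
end

section
/- Let H be a real Hilbert space, T : H ⇉ H maximally monotone, and M a bounded self-adjoint positive definite operator with positive definite square root M^{1/2}. Then for every z ∈ H, J^M_T(z) = M^{-1/2} ∘ J_{M^{-1/2} T M^{-1/2}} ∘ M^{1/2}(z), i.e. the resolvent of T in the metric M equals conjugation of the standard resolvent of the operator M^{-1/2} T M^{-1/2} by M^{1/2}. -/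
local notation "⟪" x ", " y "⟫" => @inner ℝ _ _ x y

variable {H : Type*} [NormedAddCommGroup H] [InnerProductSpace ℝ H] [CompleteSpace H]

def IsMonotoneOp (A : H → Set H) : Prop :=
  ∀ x y u v : H, u ∈ A x → v ∈ A y → (0:ℝ) ≤ ⟪x - y, u - v⟫

def IsMaxMonotoneOp (A : H → Set H) : Prop :=
  IsMonotoneOp A ∧ ∀ B : H → Set H, IsMonotoneOp B → (∀ x, A x ⊆ B x) → ∀ x, B x = A x

/-- `J^M_T(z) = M^{-1/2} ∘ J_{M^{-1/2} T M^{-1/2}} ∘ M^{1/2} (z)`.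
With `R = M^{1/2}` (so `M = R ∘ R`), `y = J^M_T z` is encoded by `M (z - y) ∈ T y`,
and `y = R⁻¹ (J_S (R z))` for `S = R⁻¹ T R⁻¹` is encoded by
`R z - R y ∈ S (R y) = R⁻¹ '' T (R⁻¹ (R y))`. -/
theorem stmt2 (T : H → Set H) (hT : IsMaxMonotoneOp T)
    (R : H ≃L[ℝ] H)
    (hRsym : ∀ x y : H, ⟪R x, y⟫ = ⟪x, R y⟫)
    (hRpd : ∀ x : H, x ≠ 0 → (0:ℝ) < ⟪R x, x⟫)
    (M : H → H) (hM : ∀ x, M x = R (R x))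
    (z y : H) :
    M (z - y) ∈ T y ↔ R z - R y ∈ R.symm '' T (R.symm (R y)) := by
  rw [R.symm_apply_apply]
  constructor
  · intro h
    exact ⟨M (z - y), h, by simp [hM, map_sub]⟩
  · rintro ⟨u, hu, hu2⟩
    have : u = M (z - y) := by
      have := congrArg R hu2
      simpa [hM, map_sub, eq_comm] using this.symm
    rwa [← this]
end

section
/- Let H be a real Hilbert space, M a self-adjoint positive definite bounded invertible operator, and B : H → H a β-cocoercive operator. Then for all x, y ∈ H: ‖(x − M⁻¹Bx) − (y − M⁻¹By)‖²_M ≤ ‖x − y‖²_M − ⟨(2β·Id − M⁻¹)(Bx − By), Bx − By⟩. In particular, if M − (1/(2β))Id is positive semidefinite, the forward operator x ↦ x − M⁻¹Bx is nonexpansive in the norm ‖·‖_M. -/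
local notation "⟪" x ", " y "⟫" => @inner ℝ _ _ x y

variable {H : Type*} [NormedAddCommGroup H] [InnerProductSpace ℝ H] [CompleteSpace H]

/-- forward-step estimate in the `M`-norm for a `β`-cocoercive `B`:
`‖(x − M⁻¹Bx) − (y − M⁻¹By)‖²_M ≤ ‖x−y‖²_M − ⟨(2β·Id − M⁻¹)(Bx−By), Bx−By⟩`;
in particular, if `M − (1/(2β))Id ⪰ 0`, the forward operator is nonexpansive in `‖·‖_M`. -/
theorem stmt5 (β : ℝ) (hβ : 0 < β) (M : H ≃L[ℝ] H)
    (hsym : ∀ x y : H, ⟪M x, y⟫ = ⟪x, M y⟫)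
    (hpd : ∀ x : H, x ≠ 0 → (0:ℝ) < ⟪M x, x⟫)
    (B : H → H)
    (hco : ∀ x y : H, β * ‖B x - B y‖ ^ 2 ≤ ⟪x - y, B x - B y⟫) :
    (∀ x y : H,
      ⟪M ((x - M.symm (B x)) - (y - M.symm (B y))), (x - M.symm (B x)) - (y - M.symm (B y))⟫
        ≤ ⟪M (x - y), x - y⟫ - ⟪(2 * β) • (B x - B y) - M.symm (B x - B y), B x - B y⟫)
    ∧ ((∀ x : H, (0:ℝ) ≤ ⟪M x - (1 / (2 * β)) • x, x⟫) →
        ∀ x y : H,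
          Real.sqrt ⟪M ((x - M.symm (B x)) - (y - M.symm (B y))),
              (x - M.symm (B x)) - (y - M.symm (B y))⟫
            ≤ Real.sqrt ⟪M (x - y), x - y⟫) := by
  have part1 : ∀ x y : H,
      ⟪M ((x - M.symm (B x)) - (y - M.symm (B y))), (x - M.symm (B x)) - (y - M.symm (B y))⟫
        ≤ ⟪M (x - y), x - y⟫ - ⟪(2 * β) • (B x - B y) - M.symm (B x - B y), B x - B y⟫ := by
    intro x y
    set u := x - y with hu
    set w := B x - B y with hw
    set s := M.symm w with hsdef
    have hs : M s = w := M.apply_symm_apply w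
    have hrw : (x - M.symm (B x)) - (y - M.symm (B y)) = u - s := by
      rw [hsdef, hw, hu, map_sub]; abel
    rw [hrw]
    have hMsub : M (u - s) = M u - w := by rw [map_sub, hs]
    have e1 : ⟪M (u - s), u - s⟫
        = (⟪M u, u⟫ - ⟪M u, s⟫) - (⟪w, u⟫ - ⟪w, s⟫) := by
      rw [hMsub]; simp only [inner_sub_left, inner_sub_right]; ring
    have hMus : ⟪M u, s⟫ = ⟪u, w⟫ := by rw [hsym, hs]
    have hwu : ⟪w, u⟫ = ⟪u, w⟫ := real_inner_comm _ _
    have e2 : ⟪(2 * β) • w - s, w⟫ = 2 * β * ⟪w, w⟫ - ⟪w, s⟫ := by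
      rw [inner_sub_left, real_inner_smul_left, real_inner_comm s w]
    have hww : ⟪w, w⟫ = ‖w‖ ^ 2 := real_inner_self_eq_norm_sq w
    have hco' : β * ‖w‖ ^ 2 ≤ ⟪u, w⟫ := hco x y
    rw [e1, e2, hMus, hwu, hww]
    linarith
  refine ⟨part1, fun hpos x y => ?_⟩
  apply Real.sqrt_le_sqrt
  have h1 := part1 x y
  set w := B x - B y with hw
  set s := M.symm w with hsdef
  have hs : M s = w := M.apply_symm_apply w
  have hkey : (0:ℝ) ≤ ⟪(2 * β) • w - s, w⟫ := by
    have e2 : ⟪(2 * β) • w - s, w⟫ = 2 * β * ‖w‖ ^ 2 - ⟪s, w⟫ := by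
      rw [inner_sub_left, real_inner_smul_left, real_inner_self_eq_norm_sq]
    have h2 := hpos s
    have e3 : ⟪M s - (1 / (2 * β)) • s, s⟫ = ⟪w, s⟫ - (1 / (2 * β)) * ‖s‖ ^ 2 := by
      rw [inner_sub_left, real_inner_smul_left, real_inner_self_eq_norm_sq, hs]
    rw [e3] at h2
    have hcs : ⟪w, s⟫ ≤ ‖w‖ * ‖s‖ := real_inner_le_norm w s
    have hns : (0:ℝ) ≤ ‖s‖ := norm_nonneg s
    have hnw : (0:ℝ) ≤ ‖w‖ := norm_nonneg w
    have hsw : ⟪s, w⟫ = ⟪w, s⟫ := real_inner_comm w s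
    rw [e2, hsw]
    -- from h2: ‖s‖² ≤ 2β⟪w,s⟫ ≤ 2β‖w‖‖s‖
    have hb2 : (0:ℝ) < 2 * β := by linarith
    have hc : 2 * β * (1 / (2 * β)) = 1 := by field_simp
    have h3 : ‖s‖ ^ 2 ≤ 2 * β * ⟪w, s⟫ := by nlinarith [mul_le_mul_of_nonneg_left h2 hb2.le]
    rcases eq_or_lt_of_le hns with h0 | h0
    · have : ‖w‖ * ‖s‖ = 0 := by rw [← h0]; ring
      nlinarith [sq_nonneg ‖w‖]
    · have h5 : ‖s‖ ≤ 2 * β * ‖w‖ := by nlinarith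
      nlinarith [mul_le_mul_of_nonneg_left h5 hnw]
  linarith
end

section
/- Let H be a real Hilbert space, M self-adjoint positive definite bounded invertible, B : H → H β-cocoercive and γ_B-strongly monotone with γ_B ≥ 0. Then for all x, y ∈ H: ‖(x − M⁻¹Bx) − (y − M⁻¹By)‖²_M ≤ ‖x − y‖²_M − ⟨(β·Id − M⁻¹)(Bx − By), Bx − By⟩ − γ_B ‖x − y‖². -/
local notation "⟪" x ", " y "⟫" => @inner ℝ _ _ x y

variable {H : Type*} [NormedAddCommGroup H] [InnerProductSpace ℝ H] [CompleteSpace H]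

/-- forward-step estimate for `B` both `β`-cocoercive and `γ_B`-strongly
monotone:
`‖(x−M⁻¹Bx)−(y−M⁻¹By)‖²_M ≤ ‖x−y‖²_M − ⟨(β·Id − M⁻¹)(Bx−By), Bx−By⟩ − γ_B‖x−y‖²`. -/
theorem stmt6 (β γB : ℝ) (hβ : 0 < β) (hγB : 0 ≤ γB) (M : H ≃L[ℝ] H)
    (hsym : ∀ x y : H, ⟪M x, y⟫ = ⟪x, M y⟫)
    (hpd : ∀ x : H, x ≠ 0 → (0:ℝ) < ⟪M x, x⟫)
    (B : H → H)
    (hco : ∀ x y : H, β * ‖B x - B y‖ ^ 2 ≤ ⟪x - y, B x - B y⟫)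
    (hsm : ∀ x y : H, γB * ‖x - y‖ ^ 2 ≤ ⟪x - y, B x - B y⟫) :
    ∀ x y : H,
      ⟪M ((x - M.symm (B x)) - (y - M.symm (B y))), (x - M.symm (B x)) - (y - M.symm (B y))⟫
        ≤ ⟪M (x - y), x - y⟫ - ⟪β • (B x - B y) - M.symm (B x - B y), B x - B y⟫
          - γB * ‖x - y‖ ^ 2 := by
  intro x y
  set u := x - y with hu
  set v := B x - B y with hv
  have hrw : (x - M.symm (B x)) - (y - M.symm (B y)) = u - M.symm v := by
    simp only [hu, hv, map_sub]; abel
  have hMw : M (M.symm v) = v := M.apply_symm_apply v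
  have h1 : ⟪M u, M.symm v⟫ = ⟪u, v⟫ := by rw [hsym, hMw]
  have expand : ⟪M (u - M.symm v), u - M.symm v⟫
      = ⟪M u, u⟫ - 2 * ⟪u, v⟫ + ⟪M.symm v, v⟫ := by
    rw [map_sub, hMw]
    simp only [inner_sub_left, inner_sub_right, h1]
    rw [real_inner_comm v u, real_inner_comm v (M.symm v)]
    ring
  have hrhs : ⟪β • v - M.symm v, v⟫ = β * ‖v‖ ^ 2 - ⟪M.symm v, v⟫ := by
    rw [inner_sub_left, real_inner_smul_left, real_inner_self_eq_norm_sq]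
  have key : β * ‖v‖ ^ 2 + γB * ‖u‖ ^ 2 ≤ 2 * ⟪u, v⟫ := by
    have := hco x y
    have := hsm x y
    rw [← hu, ← hv] at *
    linarith
  rw [hrw, expand, hrhs]
  linarith
end

section
/- Quasi-Fejér monotonicity (scalar metric case): Let H be a real Hilbert space, C ⊆ H nonempty, and (x_k) a sequence in H such that for every z ∈ C there exist summable nonnegative sequences (η_k) and (ε_k) with ‖x_{k+1} − z‖ ≤ (1 + η_k)‖x_k − z‖ + ε_k for all k. Then (x_k) is bounded and for every z ∈ C the sequence (‖x_k − z‖) converges. -/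
variable {H : Type*} [NormedAddCommGroup H] [InnerProductSpace ℝ H] [CompleteSpace H]

lemma stmt11_bound_aux (z : H) (x : ℕ → H) (η ε : ℕ → ℝ)
    (hη : ∀ k, 0 ≤ η k) (hε : ∀ k, 0 ≤ ε k) (hηs : Summable η) (hεs : Summable ε)
    (hrec : ∀ k, ‖x (k + 1) - z‖ ≤ (1 + η k) * ‖x k - z‖ + ε k) :
    ∀ k, ‖x k - z‖ ≤ Real.exp (∑' j, η j) * (‖x 0 - z‖ + ∑' j, ε j) := by
  have step : ∀ k, ‖x k - z‖ ≤
      Real.exp (∑ j ∈ Finset.range k, η j) * (‖x 0 - z‖ + ∑ j ∈ Finset.range k, ε j) := by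
    intro k
    induction k with
    | zero => simp
    | succ k ih =>
      have h1 : (1 + η k) ≤ Real.exp (η k) := by
        have := Real.add_one_le_exp (η k); linarith
      calc ‖x (k + 1) - z‖ ≤ (1 + η k) * ‖x k - z‖ + ε k := hrec k
        _ ≤ Real.exp (η k) * ‖x k - z‖ + ε k := by
            gcongr
        _ ≤ Real.exp (η k) *
              (Real.exp (∑ j ∈ Finset.range k, η j) * (‖x 0 - z‖ + ∑ j ∈ Finset.range k, ε j))
              + ε k := by
            gcongr
        _ ≤ Real.exp (∑ j ∈ Finset.range (k + 1), η j) *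
              (‖x 0 - z‖ + ∑ j ∈ Finset.range (k + 1), ε j) := by
            rw [Finset.sum_range_succ, Finset.sum_range_succ, add_comm (∑ j ∈ Finset.range k, η j) (η k), Real.exp_add]
            have h2 : (1 : ℝ) ≤ Real.exp (∑ j ∈ Finset.range k, η j) :=
              Real.one_le_exp (Finset.sum_nonneg fun j _ => hη j)
            have h3 : (1 : ℝ) ≤ Real.exp (η k) := Real.one_le_exp (hη k)
            have h4 : (1:ℝ) ≤ Real.exp (η k) * Real.exp (∑ j ∈ Finset.range k, η j) := by
              nlinarith
            nlinarith [mul_nonneg (sub_nonneg.2 h4) (hε k)]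
  intro k
  refine (step k).trans ?_
  have hxs : 0 ≤ ‖x 0 - z‖ + ∑ j ∈ Finset.range k, ε j :=
    add_nonneg (norm_nonneg _) (Finset.sum_nonneg fun j _ => hε j)
  gcongr
  · exact Summable.sum_le_tsum _ (fun j _ => hη j) hηs
  · exact Summable.sum_le_tsum _ (fun j _ => hε j) hεs

/-- quasi-Fejér monotonicity, scalar metric case: if for every `z ∈ C`
there are summable nonnegative `(η_k)`, `(ε_k)` with
`‖x_{k+1} − z‖ ≤ (1+η_k)‖x_k − z‖ + ε_k`, then `(x_k)` is bounded and `‖x_k − z‖`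
converges for every `z ∈ C`. -/
theorem stmt11 (C : Set H) (hC : C.Nonempty) (x : ℕ → H)
    (h : ∀ z ∈ C, ∃ η ε : ℕ → ℝ,
      (∀ k, 0 ≤ η k) ∧ (∀ k, 0 ≤ ε k) ∧ Summable η ∧ Summable ε ∧
      ∀ k, ‖x (k + 1) - z‖ ≤ (1 + η k) * ‖x k - z‖ + ε k) :
    (∃ R : ℝ, ∀ k, ‖x k‖ ≤ R) ∧
    ∀ z ∈ C, ∃ L : ℝ, Filter.Tendsto (fun k => ‖x k - z‖) Filter.atTop (nhds L) := by
  constructor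
  · obtain ⟨z, hz⟩ := hC
    obtain ⟨η, ε, hη, hε, hηs, hεs, hrec⟩ := h z hz
    refine ⟨Real.exp (∑' j, η j) * (‖x 0 - z‖ + ∑' j, ε j) + ‖z‖, fun k => ?_⟩
    calc ‖x k‖ ≤ ‖x k - z‖ + ‖z‖ := by
          simpa using norm_add_le (x k - z) z
      _ ≤ _ := by
          have := stmt11_bound_aux z x η ε hη hε hηs hεs hrec k
          linarith
  · intro z hz
    obtain ⟨η, ε, hη, hε, hηs, hεs, hrec⟩ := h z hz
    set M := Real.exp (∑' j, η j) * (‖x 0 - z‖ + ∑' j, ε j) with hM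
    have hbd : ∀ k, ‖x k - z‖ ≤ M := stmt11_bound_aux z x η ε hη hε hηs hεs hrec
    have hM0 : 0 ≤ M := le_trans (norm_nonneg _) (hbd 0)
    have hηsk : ∀ k, Summable fun j => η (j + k) := fun k => (summable_nat_add_iff k).2 hηs
    have hεsk : ∀ k, Summable fun j => ε (j + k) := fun k => (summable_nat_add_iff k).2 hεs
    set s : ℕ → ℝ := fun k => ∑' j, η (j + k) with hs
    set e : ℕ → ℝ := fun k => ∑' j, ε (j + k) with he
    have hsrec : ∀ k, s k = η k + s (k + 1) := by
      intro k
      have := Summable.tsum_eq_zero_add (hηsk k)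
      simpa [hs, show ∀ j : ℕ, j + 1 + k = j + (k + 1) from fun j => by omega] using this
    have herec : ∀ k, e k = ε k + e (k + 1) := by
      intro k
      have := Summable.tsum_eq_zero_add (hεsk k)
      simpa [he, show ∀ j : ℕ, j + 1 + k = j + (k + 1) from fun j => by omega] using this
    have hsnn : ∀ k, 0 ≤ s k := fun k => tsum_nonneg fun j => hη _
    have henn : ∀ k, 0 ≤ e k := fun k => tsum_nonneg fun j => hε _
    set u : ℕ → ℝ := fun k => ‖x k - z‖ + M * s k + e k with hu
    have hanti : Antitone u := by
      apply antitone_nat_of_succ_le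
      intro k
      have h1 : ‖x (k + 1) - z‖ ≤ ‖x k - z‖ + η k * M + ε k := by
        have := hrec k
        nlinarith [hbd k, hη k, norm_nonneg (x k - z)]
      have h2 := hsrec k
      have h3 := herec k
      simp only [hu]
      nlinarith
    have hbb : BddBelow (Set.range u) := by
      refine ⟨0, ?_⟩
      rintro _ ⟨k, rfl⟩
      have := norm_nonneg (x k - z)
      have := hsnn k
      have := henn k
      simp only [hu]
      nlinarith
    have hulim : Filter.Tendsto u Filter.atTop (nhds (⨅ k, u k)) :=
      tendsto_atTop_ciInf hanti hbb
    have hslim : Filter.Tendsto s Filter.atTop (nhds 0) := tendsto_sum_nat_add η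
    have helim : Filter.Tendsto e Filter.atTop (nhds 0) := tendsto_sum_nat_add ε
    refine ⟨⨅ k, u k, ?_⟩
    have : Filter.Tendsto (fun k => u k - M * s k - e k) Filter.atTop
        (nhds ((⨅ k, u k) - M * 0 - 0)) :=
      ((hulim.sub ((tendsto_const_nhds (x := M)).mul hslim)).sub helim)
    have hfun : (fun k => u k - M * s k - e k) = fun k => ‖x k - z‖ := by
      funext k; simp only [hu]; ring
    rw [hfun] at this
    simpa using this
end

section
/- Let H be a finite-dimensional real inner product space, M self-adjoint positive definite, and Q self-adjoint positive semidefinite with M − Q positive definite. Then the operator Q⁺ − M⁻¹ is positive definite on im(Q), i.e. ⟨(Q⁺ − M⁻¹) v, v⟩ > 0 for all nonzero v ∈ im(Q), where Q⁺ is the Moore–Penrose pseudo-inverse of Q. -/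
local notation "⟪" x ", " y "⟫" => @inner ℝ _ _ x y

variable {H : Type*} [NormedAddCommGroup H] [InnerProductSpace ℝ H] [FiniteDimensional ℝ H]

/-- if `M ≻ 0`, `Q ⪰ 0` self-adjoint with `M − Q ≻ 0`, then
`Q⁺ − M⁻¹` is positive definite on `im(Q)`, where `Q⁺` is the Moore–Penrose
pseudo-inverse of `Q` (characterized on `im(Q)` by `Q(Q⁺ v) = v` and `Q⁺ v ∈ im(Q)`). -/
theorem stmt14 (M : H ≃L[ℝ] H)
    (hMsym : ∀ x y : H, ⟪M x, y⟫ = ⟪x, M y⟫)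
    (hMpd : ∀ x : H, x ≠ 0 → (0:ℝ) < ⟪M x, x⟫)
    (Q : H →L[ℝ] H)
    (hQsym : ∀ x y : H, ⟪Q x, y⟫ = ⟪x, Q y⟫)
    (hQpsd : ∀ x : H, (0:ℝ) ≤ ⟪Q x, x⟫)
    (hMQ : ∀ x : H, x ≠ 0 → (0:ℝ) < ⟪M x - Q x, x⟫)
    (Qp : H → H)
    (hQp1 : ∀ v : H, (∃ w, Q w = v) → Q (Qp v) = v)
    (hQp2 : ∀ v : H, ∃ w, Q w = Qp v) :
    ∀ v : H, (∃ w, Q w = v) → v ≠ 0 → (0:ℝ) < ⟪Qp v - M.symm v, v⟫ := by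
  intro v hv hv0
  set u := Qp v with hu
  have hQu : Q u = v := hQp1 v hv
  set x := M.symm v with hx
  have hMx : M x = v := M.apply_symm_apply v
  have hx0 : x ≠ 0 := by
    intro h
    exact hv0 (by rw [← hMx, h, map_zero])
  have h1 : (0:ℝ) ≤ ⟪Q (u - x), u - x⟫ := hQpsd _
  have h2 : (0:ℝ) < ⟪M x - Q x, x⟫ := hMQ x hx0
  have hcomm : ⟪Q x, u⟫ = ⟪Q u, x⟫ := by rw [hQsym, real_inner_comm]
  have e1 : ⟪Q (u - x), u - x⟫ = ⟪Q u, u⟫ - 2*⟪Q u, x⟫ + ⟪Q x, x⟫ := by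
    rw [map_sub, inner_sub_left, inner_sub_right, inner_sub_right, hcomm]; ring
  have e2 : ⟪M x - Q x, x⟫ = ⟪Q u, x⟫ - ⟪Q x, x⟫ := by
    rw [inner_sub_left, hMx, ← hQu]
  have e3 : ⟪u - x, v⟫ = ⟪Q u, u⟫ - ⟪Q u, x⟫ := by
    rw [inner_sub_left, ← hQu, real_inner_comm u, real_inner_comm x]
  rw [e3]
  rw [e1] at h1
  rw [e2] at h2
  linarith
end
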